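/- Let P : E → E be a linear map (not assumed continuous), and write P − z₀ for the map f ↦ P f − z₀ f. Suppose that (i) for every z ∈ U \ {z₀} and every f ∈ E one has P(R(z)f) − z·(R(z)f) = f, and (ii) for every f ∈ E the map z ↦ P(H(z)f) is bounded on some neighborhood of z₀ in U. Then for every f ∈ E one has (P − z₀)(A₋ⱼ f) = A₋₍ⱼ₊₁₎ f for all 1 ≤ j ≤ k−1 and (P − z₀)(A₋ₖ f) = 0. Consequently A₋ⱼ f = (P − z₀)^{j−1}(A₋₁ f) for all 1 ≤ j ≤ k and all f ∈ E, the composition (P − z₀)^k ∘ A₋₁ is zero, and if A₋ₖ ≠ 0 then (P − z₀)^{k−1} ∘ A₋₁ ≠ 0. -/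

import Mathlib

open Filter Topology

lemma aux_vanish {E : Type*} [NormedAddCommGroup E] [NormedSpace ℂ E] (z₀ : ℂ) :
    ∀ (m : ℕ) (b : ℕ → E) (C : ℝ),
      (∀ᶠ z in 𝓝[≠] z₀, ‖∑ j ∈ Finset.Icc 1 m, (z - z₀) ^ (-(j : ℤ)) • b j‖ ≤ C) →
      ∀ j ∈ Finset.Icc 1 m, b j = 0 := by
  intro m
  induction m with
  | zero => intro b C _ j hj; simp at hj
  | succ m ih =>
    intro b C hC
    set g : ℂ → E := fun z => ∑ j ∈ Finset.Icc 1 (m+1), (z - z₀) ^ (-(j : ℤ)) • b j with hg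
    have htop : b (m+1) = 0 := by
      set φ : ℂ → E := fun z => ∑ j ∈ Finset.Icc 1 (m+1), (z - z₀) ^ (m+1-j) • b j with hφ
      have hcont : Continuous φ := by
        apply continuous_finset_sum
        intro j _
        exact ((continuous_id.sub continuous_const).pow _).smul continuous_const
      have hφz₀ : φ z₀ = b (m+1) := by
        rw [hφ]
        simp only [sub_self]
        rw [Finset.sum_eq_single (m+1)]
        · simp
        · intro j hj hne
          simp only [Finset.mem_Icc] at hj
          have : 0 < m + 1 - j := by omega
          rw [zero_pow (by omega), zero_smul]
        · intro h; simp at h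
      have heq : ∀ᶠ z in 𝓝[≠] z₀, (z - z₀) ^ (m+1) • g z = φ z := by
        filter_upwards [self_mem_nhdsWithin] with z hz
        have hw : z - z₀ ≠ 0 := sub_ne_zero.mpr hz
        rw [hg, hφ, Finset.smul_sum]
        apply Finset.sum_congr rfl
        intro j hj
        simp only [Finset.mem_Icc] at hj
        rw [smul_smul]
        congr 1
        rw [← zpow_natCast (z - z₀) (m+1), ← zpow_add₀ hw, ← zpow_natCast (z - z₀) (m+1-j)]
        congr 1
        omega
      have h1 : Tendsto (fun z => (z - z₀) ^ (m+1) • g z) (𝓝[≠] z₀) (𝓝 (b (m+1))) := by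
        refine Tendsto.congr' (EventuallyEq.symm heq) ?_
        rw [← hφz₀]
        exact (hcont.tendsto z₀).mono_left nhdsWithin_le_nhds
      have h2 : Tendsto (fun z => (z - z₀) ^ (m+1) • g z) (𝓝[≠] z₀) (𝓝 0) := by
        have hnorm : ∀ᶠ z in 𝓝[≠] z₀, ‖(z - z₀) ^ (m+1) • g z‖ ≤ ‖z - z₀‖ ^ (m+1) * C := by
          filter_upwards [hC] with z hz
          rw [norm_smul, norm_pow]
          exact mul_le_mul_of_nonneg_left hz (by positivity)
        have htend : Tendsto (fun z : ℂ => ‖z - z₀‖ ^ (m+1) * C) (𝓝[≠] z₀) (𝓝 0) := by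
          have : Tendsto (fun z : ℂ => ‖z - z₀‖ ^ (m+1) * C) (𝓝 z₀) (𝓝 (‖(0:ℂ)‖^(m+1) * C)) := by
            apply Tendsto.mul_const
            exact ((continuous_norm.comp (continuous_id.sub continuous_const)).pow _).tendsto' z₀ _ (by simp)
          simpa using this.mono_left nhdsWithin_le_nhds
        exact squeeze_zero_norm' hnorm htend
      exact tendsto_nhds_unique h1 h2
    have hC' : ∀ᶠ z in 𝓝[≠] z₀, ‖∑ j ∈ Finset.Icc 1 m, (z - z₀) ^ (-(j : ℤ)) • b j‖ ≤ C := by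
      filter_upwards [hC] with z hz
      rwa [Finset.sum_Icc_succ_top (by omega : 1 ≤ m + 1), htop, smul_zero, add_zero] at hz
    intro j hj
    simp only [Finset.mem_Icc] at hj
    rcases Nat.lt_or_ge j (m+1) with h | h
    · exact ih b C hC' j (Finset.mem_Icc.mpr ⟨hj.1, by omega⟩)
    · have : j = m + 1 := by omega
      rw [this]; exact htop

/-- algebraic structure of the Laurent coefficients of a meromorphically
continued resolvent at a resonance `z₀` (Banach-space abstraction of Proposition 2.2). -/
theorem stmt_0
    {E : Type*} [NormedAddCommGroup E] [NormedSpace ℂ E] [CompleteSpace E]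
    (z₀ : ℂ) (k : ℕ) (hk : 1 ≤ k)
    (U : Set ℂ) (hU : IsOpen U) (hz₀ : z₀ ∈ U)
    (A : ℕ → (E →L[ℂ] E)) (H : ℂ → (E →L[ℂ] E))
    (hH : AnalyticOnNhd ℂ H U)
    (R : ℂ → (E →L[ℂ] E))
    (hR : ∀ z ∈ U \ {z₀},
      R z = (∑ j ∈ Finset.Icc 1 k, (z - z₀) ^ (-(j : ℤ)) • A j) + H z)
    (P : E →ₗ[ℂ] E)
    (hres : ∀ z ∈ U \ {z₀}, ∀ f : E, P (R z f) - z • R z f = f)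
    (hbdd : ∀ f : E, ∃ V ∈ 𝓝 z₀, ∃ C : ℝ, ∀ z ∈ V ∩ U, ‖P (H z f)‖ ≤ C) :
    (∀ f : E,
        (∀ j : ℕ, 1 ≤ j → j ≤ k - 1 → P (A j f) - z₀ • A j f = A (j + 1) f) ∧
        P (A k f) - z₀ • A k f = 0) ∧
    (∀ j : ℕ, 1 ≤ j → j ≤ k → ∀ f : E,
        A j f = ((P - z₀ • (1 : Module.End ℂ E)) ^ (j - 1)) (A 1 f)) ∧
    (∀ f : E, ((P - z₀ • (1 : Module.End ℂ E)) ^ k) (A 1 f) = 0) ∧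
    (A k ≠ 0 → ∃ f : E, ((P - z₀ • (1 : Module.End ℂ E)) ^ (k - 1)) (A 1 f) ≠ 0) := by
  -- the key vanishing of Laurent-coefficient relations
  have key : ∀ f : E, ∀ j ∈ Finset.Icc 1 k,
      P (A j f) - z₀ • A j f - (if j = k then 0 else A (j+1) f) = 0 := by
    intro f
    set b : ℕ → E := fun j => P (A j f) - z₀ • A j f - (if j = k then 0 else A (j+1) f) with hb
    obtain ⟨V, hV, C, hCb⟩ := hbdd f
    -- continuity of z ↦ H z f at z₀
    have hHc : ContinuousAt (fun z => H z f) z₀ := by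
      exact ((ContinuousLinearMap.apply ℂ E f).continuous.continuousAt).comp
        (hH z₀ hz₀).continuousAt
    -- the key algebraic identity on U \ {z₀}
    have hid : ∀ z ∈ U \ {z₀},
        ∑ j ∈ Finset.Icc 1 k, (z - z₀) ^ (-(j : ℤ)) • b j
          = f + A 1 f - P (H z f) + z • H z f := by
      intro z hz
      set w := z - z₀ with hwdef
      have hw : w ≠ 0 := sub_ne_zero.mpr hz.2
      have hRf : R z f = (∑ j ∈ Finset.Icc 1 k, w ^ (-(j : ℤ)) • A j f) + H z f := by
        rw [hR z hz]
        simp [ContinuousLinearMap.sum_apply, ContinuousLinearMap.smul_apply, hwdef]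
      have hresz := hres z hz f
      rw [hRf, map_add, map_sum] at hresz
      simp only [map_smul] at hresz
      clear_value w
      -- reindexing identity
      have hshift : ∑ j ∈ Finset.Icc 1 k, w ^ (-(j : ℤ)) • (w • A j f)
          = A 1 f + ∑ j ∈ Finset.Icc 1 k, w ^ (-(j : ℤ)) • (if j = k then (0:E) else A (j+1) f) := by
        have e1 : ∀ j ∈ Finset.Icc 1 k, w ^ (-(j : ℤ)) • (w • A j f)
            = w ^ ((1 : ℤ) - j) • A j f := by
          intro j hj
          rw [smul_smul]
          congr 1
          rw [show (1 : ℤ) - (j : ℤ) = -(j : ℤ) + 1 by ring, zpow_add₀ hw, zpow_one]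
        rw [Finset.sum_congr rfl e1, ← Finset.Ico_add_one_right_eq_Icc, Finset.sum_Ico_eq_sum_range,
          Finset.sum_Ico_eq_sum_range]
        simp only [Nat.add_sub_cancel]
        have hk1 : k = (k - 1) + 1 := by omega
        rw [hk1, Finset.sum_range_succ', Finset.sum_range_succ]
        have hlast : w ^ (-((1 + (k-1) : ℕ) : ℤ)) •
            (if 1 + (k-1) = (k-1) + 1 then (0:E) else A (1 + (k-1) + 1) f) = 0 := by
          rw [if_pos (by omega), smul_zero]
        rw [hlast]
        have hfirst : w ^ ((1 : ℤ) - ((1 + 0 : ℕ) : ℤ)) • A (1 + 0) f = A 1 f := by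
          norm_num
        rw [hfirst, add_zero]
        conv_rhs => rw [add_comm]
        congr 1
        apply Finset.sum_congr rfl
        intro i hi
        simp only [Finset.mem_range] at hi
        rw [if_neg (by omega)]
        have h1 : (1 : ℤ) - ((1 + (i+1) : ℕ) : ℤ) = -((1 + i : ℕ) : ℤ) := by push_cast; ring
        have h2 : 1 + (i + 1) = 1 + i + 1 := by omega
        rw [h1, h2]
      -- assemble
      have e2 : ∀ j ∈ Finset.Icc 1 k, b j
          = (P (A j f) - z • A j f) + w • A j f
            - (if j = k then (0:E) else A (j+1) f) := by
        intro j _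
        simp only [hb, hwdef]
        module
      calc ∑ j ∈ Finset.Icc 1 k, w ^ (-(j : ℤ)) • b j
          = ∑ j ∈ Finset.Icc 1 k, (w ^ (-(j : ℤ)) • (P (A j f) - z • A j f)
            + w ^ (-(j : ℤ)) • (w • A j f)
            - w ^ (-(j : ℤ)) • (if j = k then (0:E) else A (j+1) f)) := by
            apply Finset.sum_congr rfl
            intro j hj
            rw [e2 j hj, smul_sub, smul_add]
        _ = (∑ j ∈ Finset.Icc 1 k, w ^ (-(j : ℤ)) • (P (A j f) - z • A j f))
            + (∑ j ∈ Finset.Icc 1 k, w ^ (-(j : ℤ)) • (w • A j f))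
            - ∑ j ∈ Finset.Icc 1 k, w ^ (-(j : ℤ)) • (if j = k then (0:E) else A (j+1) f) := by
            rw [Finset.sum_sub_distrib, Finset.sum_add_distrib]
        _ = (∑ j ∈ Finset.Icc 1 k, w ^ (-(j : ℤ)) • (P (A j f) - z • A j f)) + A 1 f := by
            rw [hshift]; abel
        _ = f + A 1 f - P (H z f) + z • H z f := by
            have e3 : ∑ j ∈ Finset.Icc 1 k, w ^ (-(j : ℤ)) • (P (A j f) - z • A j f)
                = f - P (H z f) + z • H z f := by
              have e4 : ∑ j ∈ Finset.Icc 1 k, w ^ (-(j : ℤ)) • (P (A j f) - z • A j f)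
                  = (∑ j ∈ Finset.Icc 1 k, w ^ (-(j : ℤ)) • P (A j f))
                    - z • ∑ j ∈ Finset.Icc 1 k, w ^ (-(j : ℤ)) • A j f := by
                rw [Finset.smul_sum, ← Finset.sum_sub_distrib]
                apply Finset.sum_congr rfl
                intro j _
                rw [smul_sub, smul_comm]
              rw [e4]
              rw [smul_add] at hresz
              have h6 : (∑ j ∈ Finset.Icc 1 k, w ^ (-(j:ℤ)) • P (A j f))
                  - z • ∑ j ∈ Finset.Icc 1 k, w ^ (-(j:ℤ)) • A j f
                  = ((∑ j ∈ Finset.Icc 1 k, w ^ (-(j:ℤ)) • P (A j f)) + P (H z f)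
                      - (z • (∑ j ∈ Finset.Icc 1 k, w ^ (-(j:ℤ)) • A j f) + z • H z f))
                    - P (H z f) + z • H z f := by abel
              rw [h6, hresz]
            rw [e3]; abel
    -- boundedness of the right-hand side near z₀
    obtain ⟨C₂, hC₂⟩ : ∃ C₂, ∀ᶠ z in 𝓝 z₀, ‖H z f‖ ≤ C₂ := by
      refine ⟨‖H z₀ f‖ + 1, ?_⟩
      have := hHc.norm.eventually_lt_const (lt_add_one ‖H z₀ f‖)
      filter_upwards [this] with z hz using le_of_lt hz
    have hznorm : ∀ᶠ z : ℂ in 𝓝 z₀, ‖z‖ ≤ ‖z₀‖ + 1 := by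
      have : ContinuousAt (fun z : ℂ => ‖z‖) z₀ := continuous_norm.continuousAt
      filter_upwards [this.eventually_lt_const (lt_add_one ‖z₀‖)] with z hz using le_of_lt hz
    have hC₂0 : 0 ≤ C₂ := le_trans (norm_nonneg _) (hC₂.self_of_nhds)
    set M : ℝ := ‖f‖ + ‖A 1 f‖ + C + (‖z₀‖ + 1) * C₂ with hM
    have hbound : ∀ᶠ z in 𝓝[≠] z₀,
        ‖∑ j ∈ Finset.Icc 1 k, (z - z₀) ^ (-(j : ℤ)) • b j‖ ≤ M := by
      have hUev : ∀ᶠ z in 𝓝 z₀, z ∈ U := hU.mem_nhds hz₀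
      filter_upwards [nhdsWithin_le_nhds hUev, nhdsWithin_le_nhds hV,
        nhdsWithin_le_nhds hC₂, nhdsWithin_le_nhds hznorm, self_mem_nhdsWithin]
        with z hzU hzV hHz hzn hzne
      rw [hid z ⟨hzU, hzne⟩]
      calc ‖f + A 1 f - P (H z f) + z • H z f‖
          ≤ ‖f + A 1 f - P (H z f)‖ + ‖z • H z f‖ := norm_add_le _ _
        _ ≤ ‖f + A 1 f‖ + ‖P (H z f)‖ + ‖z • H z f‖ := by
            exact add_le_add_left (norm_sub_le _ _) _
        _ ≤ (‖f‖ + ‖A 1 f‖) + C + (‖z₀‖ + 1) * C₂ := by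
            refine add_le_add (add_le_add (norm_add_le _ _) (hCb z ⟨hzV, hzU⟩)) ?_
            rw [norm_smul]
            exact mul_le_mul hzn hHz (norm_nonneg _) (by positivity)
        _ = M := hM.symm
    exact aux_vanish z₀ k b M hbound
  -- unpack `key`
  have b1 : ∀ f : E, ∀ j : ℕ, 1 ≤ j → j ≤ k - 1 →
      P (A j f) - z₀ • A j f = A (j + 1) f := by
    intro f j h1 h2
    have h := key f j (Finset.mem_Icc.mpr ⟨h1, by omega⟩)
    rw [if_neg (by omega)] at h
    exact sub_eq_zero.mp h
  have bk : ∀ f : E, P (A k f) - z₀ • A k f = 0 := by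
    intro f
    have h := key f k (Finset.mem_Icc.mpr ⟨hk, le_rfl⟩)
    rwa [if_pos rfl, sub_zero] at h
  have Qapp : ∀ x : E, (P - z₀ • (1 : Module.End ℂ E)) x = P x - z₀ • x := by
    intro x
    simp [LinearMap.sub_apply, Module.End.one_apply]
  have b2 : ∀ j : ℕ, 1 ≤ j → j ≤ k → ∀ f : E,
      A j f = ((P - z₀ • (1 : Module.End ℂ E)) ^ (j - 1)) (A 1 f) := by
    intro j hj1
    induction j, hj1 using Nat.le_induction with
    | base => intro _ f; simp
    | succ j hj ih =>
      intro hjk f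
      have h1 : j ≤ k - 1 := by omega
      have h2 := b1 f j hj h1
      have h3 : j + 1 - 1 = (j - 1) + 1 := by omega
      rw [← h2, h3, pow_succ', Module.End.mul_apply, ← ih (by omega) f, Qapp]
  refine ⟨fun f => ⟨b1 f, bk f⟩, b2, ?_, ?_⟩
  · intro f
    have hkk : k = (k - 1) + 1 := by omega
    rw [hkk, pow_succ', Module.End.mul_apply, ← b2 k hk le_rfl f]
    · rw [Qapp]; exact bk f
  · intro hAk
    obtain ⟨f, hf⟩ : ∃ f, A k f ≠ 0 := by
      by_contra h
      push_neg at h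
      exact hAk (ContinuousLinearMap.ext fun f => by simp [h f])
    exact ⟨f, by rw [← b2 k hk le_rfl f]; exact hf⟩
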